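/- Let f(x) = x^4 + cx + d ∈ ℤ[x] be monogenic with cyclic Galois group, and let t be the integer root of the resolvent cubic x^3 - 4dx - c^2. Then for every prime q ≥ 5 dividing 3t^2 - 4d, q exactly divides 3t^2 - 4d and q exactly divides 16d - 3t^2 (i.e., q² divides neither). -/

import Mathlib

set_option maxHeartbeats 2000000


open Polynomial

/-- A polynomial `f ∈ ℤ[x]` is monogenic if it is monic, irreducible over `ℚ`, and for
every number field `K` containing a root `θ` of `f`, the ring of integers of `K` is
`ℤ[θ]`. -/
def IsMonogenic (f : Polynomial ℤ) : Prop :=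
  f.Monic ∧ Irreducible (f.map (algebraMap ℤ ℚ)) ∧
    ∀ (K : Type) [Field K] [Algebra ℚ K] [FiniteDimensional ℚ K] (θ : K),
      Polynomial.aeval θ f = 0 →
        Algebra.adjoin ℤ ({θ} : Set K) = integralClosure ℤ K

/-- The Galois group of `x^4 + c x + d` over `ℚ`. -/
abbrev quarticGal (c d : ℤ) : Type :=
  ((X ^ 4 + C (c : ℚ) * X + C (d : ℚ)).SplittingField ≃ₐ[ℚ]
    (X ^ 4 + C (c : ℚ) * X + C (d : ℚ)).SplittingField)

/-- If `x^4 + c x + d` is monogenic with cyclic Galois group `C₄` and `t` is the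
integer root of its resolvent cubic, then every prime `q ≥ 5` dividing `3 t^2 - 4 d`
exactly divides both `3 t^2 - 4 d` and `16 d - 3 t^2`. -/

lemma dvdA3 (t c d a qz s m : ℤ) (h1 : t^3 - 4*d*t - c^2 = 0)
    (h2 : 3*t^2 - 4*d = qz*m) (h3 : c*a = qz^2*s - t^2) :
    qz ∣ c^3*(12*a^3 + 3*c) :=
  ⟨(12)*c^2*a^2*qz*s + (-12)*t^2*d*m + (-12)*t^2*c*a*qz*s + (-3)*t^4*m + (12)*t^4*qz*s, by linear_combination ((-3)*c^2 + (12)*t*d + (-3)*t^3) * h1 + ((-12)*t^2*d + (-3)*t^4) * h2 + ((12)*c^2*a^2 + (-12)*t^2*c*a + (12)*t^4) * h3⟩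

lemma dvdA2 (t c d a qz s m : ℤ) (h1 : t^3 - 4*d*t - c^2 = 0)
    (h2 : 3*t^2 - 4*d = qz*m) (h3 : c*a = qz^2*s - t^2) :
    qz^2 ∣ c^6*(54*a^6 + 6*d*a^2 + 30*c*a^3 + 3*c^2) :=
  ⟨(54)*c^5*a^5*s + (6)*c^5*d*a*s + (30)*c^6*a^2*s + (-54)*t^2*c^4*a^4*s + (-6)*t^2*c^4*d*s + (-30)*t^2*c^5*a*s + (48)*t^4*d^2*m^2 + (54)*t^4*c^3*a^3*s + (30)*t^4*c^4*s + (30)*t^6*d*m^2 + (-54)*t^6*c^2*a^2*s + (3)*t^8*m^2 + (54)*t^8*c*a*s + (-54)*t^10*s, by linear_combination ((-3)*c^6 + (12)*t*c^4*d + (-48)*t^2*c^2*d^2 + (192)*t^3*d^3 + (-3)*t^3*c^4 + (18)*t^4*c^2*d + (-120)*t^5*d^2 + (27)*t^6*c^2 + (-90)*t^7*d + (27)*t^9) * h1 + ((48)*t^4*d^2*qz*m + (-192)*t^4*d^3 + (30)*t^6*d*qz*m + (24)*t^6*d^2 + (3)*t^8*qz*m + (78)*t^8*d + (9)*t^10)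 * h2 + ((54)*c^5*a^5 + (6)*c^5*d*a + (30)*c^6*a^2 + (-54)*t^2*c^4*a^4 + (-6)*t^2*c^4*d + (-30)*t^2*c^5*a + (54)*t^4*c^3*a^3 + (30)*t^4*c^4 + (-54)*t^6*c^2*a^2 + (54)*t^8*c*a + (-54)*t^10) * h3⟩

lemma dvdA1 (t c d a qz s m : ℤ) (h1 : t^3 - 4*d*t - c^2 = 0)
    (h2 : 3*t^2 - 4*d = qz*m) (h3 : c*a = qz^2*s - t^2) :
    qz^3 ∣ c^9*(108*a^9 + 40*d*a^5 - 4*d^2*a + 100*c*a^6 + 4*c*d*a^2 + 20*c^2*a^3 + c^3) :=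
  ⟨(108)*c^7*a^7*qz*s^2 + (40)*c^7*d*a^3*qz*s^2 + (100)*c^8*a^4*qz*s^2 + (4)*c^8*d*qz*s^2 + (20)*c^9*a*qz*s^2 + (-216)*t^2*c^6*a^6*qz*s^2 + (-80)*t^2*c^6*d*a^2*qz*s^2 + (-200)*t^2*c^7*a^3*qz*s^2 + (-40)*t^2*c^8*qz*s^2 + (256)*t^4*d^5*s*m + (324)*t^4*c^5*a^5*qz*s^2 + (120)*t^4*c^5*d*a*qz*s^2 + (300)*t^4*c^6*a^2*qz*s^2 + (-80)*t^6*d^3*m^3 + (448)*t^6*d^4*s*m + (-432)*t^6*c^4*a^4*qz*s^2 + (-160)*t^6*c^4*d*qz*s^2 + (-400)*t^6*c^5*a*qz*s^2 + (-84)*t^8*d^2*m^3 + (-3920)*t^8*d^3*s*m + (540)*t^8*c^3*a^3*qz*s^2 + (500)*t^8*c^4*qz*s^2 + (-24)*t^10*d*m^3 + (276)*t^10*d^2*s*m + (-648)*t^10*c^2*a^2*qz*s^2 + (-1)*t^12*m^3 + (1536)*t^12*d*s*m + (756)*t^12*c*a*qz*s^2 + (144)*t^14*s*m + (-864)*t^14*qz*s^2,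 by linear_combination ((4)*c^6*d^2*qz^2*s + (-1)*c^10 + (-16)*t*c^4*d^3*qz^2*s + (4)*t*c^8*d + (64)*t^2*c^2*d^4*qz^2*s + (8)*t^2*c^6*d*qz^2*s + (-20)*t^2*c^6*d^2 + (-256)*t^3*d^5*qz^2*s + (-28)*t^3*c^4*d^2*qz^2*s + (80)*t^3*c^4*d^3 + (-1)*t^3*c^8 + (96)*t^4*c^2*d^3*qz^2*s + (-320)*t^4*c^2*d^4 + (-60)*t^4*c^6*qz^2*s + (4)*t^4*c^6*d + (-320)*t^5*d^4*qz^2*s + (1280)*t^5*d^5 + (248)*t^5*c^4*d*qz^2*s + (-36)*t^5*c^4*d^2 + (-1020)*t^6*c^2*d^2*qz^2*s + (224)*t^6*c^2*d^3 + (19)*t^6*c^6 + (4176)*t^7*d^3*qz^2*s + (-1216)*t^7*d^4 + (-60)*t^7*c^4*qz^2*s + (-72)*t^7*c^4*d + (288)*t^8*c^2*d*qz^2*s + (252)*t^8*c^2*d^2 + (-2172)*t^9*d^2*qz^2*s + (-784)*t^9*d^3 + (19)*t^9*c^4 + (540)*t^10*c^2*qz^2*s + (-108)*t^10*c^2*d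 + (-1872)*t^11*d*qz^2*s + (684)*t^11*d^2 + (-81)*t^12*c^2 + (540)*t^13*qz^2*s + (216)*t^13*d + (-81)*t^15) * h1 + ((256)*t^4*d^5*qz^2*s + (-80)*t^6*d^3*qz^2*m^2 + (320)*t^6*d^4*qz*m + (448)*t^6*d^4*qz^2*s + (-1280)*t^6*d^5 + (-84)*t^8*d^2*qz^2*m^2 + (96)*t^8*d^3*qz*m + (-3920)*t^8*d^3*qz^2*s + (576)*t^8*d^4 + (-24)*t^10*d*qz^2*m^2 + (-156)*t^10*d^2*qz*m + (276)*t^10*d^2*qz^2*s + (912)*t^10*d^3 + (-1)*t^12*qz^2*m^2 + (-68)*t^12*d*qz*m + (1536)*t^12*d*qz^2*s + (-196)*t^12*d^2 + (-3)*t^14*qz*m + (144)*t^14*qz^2*s + (-192)*t^14*d + (-9)*t^16) * h2 + ((108)*c^7*a^7*qz^2*s + (40)*c^7*d*a^3*qz^2*s + (100)*c^8*a^4*qz^2*s + (108)*c^8*a^8 + (4)*c^8*d*qz^2*s + (40)*c^8*d*a^4 + (-4)*c^8*d^2 + (20)*c^9*a*qz^2*s + (100)*c^9*a^5 + (4)*c^9*d*a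 + (20)*c^10*a^2 + (-216)*t^2*c^6*a^6*qz^2*s + (-80)*t^2*c^6*d*a^2*qz^2*s + (-200)*t^2*c^7*a^3*qz^2*s + (-108)*t^2*c^7*a^7 + (-40)*t^2*c^7*d*a^3 + (-40)*t^2*c^8*qz^2*s + (-100)*t^2*c^8*a^4 + (-4)*t^2*c^8*d + (-20)*t^2*c^9*a + (324)*t^4*c^5*a^5*qz^2*s + (120)*t^4*c^5*d*a*qz^2*s + (300)*t^4*c^6*a^2*qz^2*s + (108)*t^4*c^6*a^6 + (40)*t^4*c^6*d*a^2 + (100)*t^4*c^7*a^3 + (20)*t^4*c^8 + (-432)*t^6*c^4*a^4*qz^2*s + (-160)*t^6*c^4*d*qz^2*s + (-400)*t^6*c^5*a*qz^2*s + (-108)*t^6*c^5*a^5 + (-40)*t^6*c^5*d*a + (-100)*t^6*c^6*a^2 + (540)*t^8*c^3*a^3*qz^2*s + (500)*t^8*c^4*qz^2*s + (108)*t^8*c^4*a^4 + (40)*t^8*c^4*d + (100)*t^8*c^5*a + (-648)*t^10*c^2*a^2*qz^2*s + (-108)*t^10*c^3*a^3 + (-100)*t^10*c^4 + (756)*t^12*c*a*qz^2*s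 + (108)*t^12*c^2*a^2 + (-864)*t^14*qz^2*s + (-108)*t^14*c*a + (108)*t^16) * h3⟩

lemma dvdA0 (t c d a qz s m : ℤ) (h1 : t^3 - 4*d*t - c^2 = 0)
    (h2 : 3*t^2 - 4*d = qz*m) (h3 : c*a = qz^2*s - t^2) :
    qz^4 ∣ c^12*(81*a^12 + 67*d*a^8 - 13*d^2*a^4 + d^3 + 111*c*a^9 + 14*c*d*a^5 - c*d^2*a + 33*c^2*a^6 + c^2*d*a^2 + 3*c^3*a^3) :=
  ⟨(81)*c^10*a^10*s^2 + (67)*c^10*d*a^6*s^2 + (-13)*c^10*d^2*a^2*s^2 + (111)*c^11*a^7*s^2 + (14)*c^11*d*a^3*s^2 + (33)*c^12*a^4*s^2 + (1)*c^12*d*s^2 + (3)*c^13*a*s^2 + (-162)*t^2*c^9*a^9*s^2 + (-134)*t^2*c^9*d*a^5*s^2 + (26)*t^2*c^9*d^2*a*s^2 + (-222)*t^2*c^10*a^6*s^2 + (-28)*t^2*c^10*d*a^2*s^2 + (-66)*t^2*c^11*a^3*s^2 + (-6)*t^2*c^12*s^2 + (243)*t^4*c^8*a^8*s^2 + (201)*t^4*c^8*d*a^4*s^2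 + (-39)*t^4*c^8*d^2*s^2 + (333)*t^4*c^9*a^5*s^2 + (42)*t^4*c^9*d*a*s^2 + (99)*t^4*c^10*a^2*s^2 + (16)*t^6*d^5*m^4 + (-256)*t^6*d^6*s*m^2 + (-324)*t^6*c^7*a^7*s^2 + (-268)*t^6*c^7*d*a^3*s^2 + (-444)*t^6*c^8*a^4*s^2 + (-56)*t^6*c^8*d*s^2 + (-132)*t^6*c^9*a*s^2 + (40)*t^8*d^4*m^4 + (-512)*t^8*d^5*s*m^2 + (405)*t^8*c^6*a^6*s^2 + (335)*t^8*c^6*d*a^2*s^2 + (555)*t^8*c^7*a^3*s^2 + (165)*t^8*c^8*s^2 + (73)*t^10*d^3*m^4 + (3040)*t^10*d^4*s*m^2 + (-486)*t^10*c^5*a^5*s^2 + (-402)*t^10*c^5*d*a*s^2 + (-666)*t^10*c^6*a^2*s^2 + (36)*t^12*d^2*m^4 + (1280)*t^12*d^3*s*m^2 + (567)*t^12*c^4*a^4*s^2 + (469)*t^12*c^4*d*s^2 + (777)*t^12*c^5*a*s^2 + (6)*t^14*d*m^4 + (-1461)*t^14*d^2*s*m^2 + (-648)*t^14*c^3*a^3*s^2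 + (-888)*t^14*c^4*s^2 + (-660)*t^16*d*s*m^2 + (729)*t^16*c^2*a^2*s^2 + (-18)*t^18*s*m^2 + (-810)*t^18*c*a*s^2 + (891)*t^20*s^2, by linear_combination ((1)*c^10*d^2*qz^2*s + (-1)*c^10*d^3 + (-4)*t*c^8*d^3*qz^2*s + (4)*t*c^8*d^4 + (16)*t^2*c^6*d^4*qz^2*s + (-16)*t^2*c^6*d^5 + (2)*t^2*c^10*d*qz^2*s + (-1)*t^2*c^10*d^2 + (-64)*t^3*c^4*d^5*qz^2*s + (64)*t^3*c^4*d^6 + (-7)*t^3*c^8*d^2*qz^2*s + (3)*t^3*c^8*d^3 + (256)*t^4*c^2*d^6*qz^2*s + (-256)*t^4*c^2*d^7 + (24)*t^4*c^6*d^3*qz^2*s + (-8)*t^4*c^6*d^4 + (-9)*t^4*c^10*qz^2*s + (-1)*t^4*c^10*d + (-1024)*t^5*d^7*qz^2*s + (1024)*t^5*d^8 + (-80)*t^5*c^4*d^4*qz^2*s + (16)*t^5*c^4*d^5 + (38)*t^5*c^8*d*qz^2*s + (3)*t^5*c^8*d^2 + (256)*t^6*c^2*d^5*qz^2*s + (-211)*t^6*c^6*d^2*qz^2*s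 + (-9)*t^6*c^6*d^3 + (3)*t^6*c^10 + (-768)*t^7*d^6*qz^2*s + (-256)*t^7*d^7 + (868)*t^7*c^4*d^3*qz^2*s + (28)*t^7*c^4*d^4 + (-9)*t^7*c^8*qz^2*s + (-13)*t^7*c^8*d + (-3552)*t^8*c^2*d^4*qz^2*s + (-96)*t^8*c^2*d^5 + (4)*t^8*c^6*d*qz^2*s + (68)*t^8*c^6*d^2 + (14464)*t^9*d^5*qz^2*s + (384)*t^9*d^6 + (-227)*t^9*c^4*d^2*qz^2*s + (-281)*t^9*c^4*d^3 + (3)*t^9*c^8 + (1776)*t^10*c^2*d^3*qz^2*s + (1152)*t^10*c^2*d^4 + (189)*t^10*c^6*qz^2*s + (-11)*t^10*c^6*d + (-10656)*t^11*d^4*qz^2*s + (-4704)*t^11*d^5 + (-752)*t^11*c^4*d*qz^2*s + (112)*t^11*c^4*d^2 + (2781)*t^12*c^2*d^2*qz^2*s + (-729)*t^12*c^2*d^3 + (-30)*t^12*c^6 + (-9348)*t^13*d^3*qz^2*s + (4068)*t^13*d^4 + (189)*t^13*c^4*qz^2*s + (109)*t^13*c^4*d + (-972)*t^14*c^2*d*qz^2*s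 + (-324)*t^14*c^2*d^2 + (6669)*t^15*d^2*qz^2*s + (567)*t^15*d^3 + (-30)*t^15*c^4 + (-810)*t^16*c^2*qz^2*s + (162)*t^16*c^2*d + (2268)*t^17*d*qz^2*s + (-972)*t^17*d^2 + (81)*t^18*c^2 + (-810)*t^19*qz^2*s + (-162)*t^19*d + (81)*t^21) * h1 + ((16)*t^6*d^5*qz^3*m^3 + (-64)*t^6*d^6*qz^2*m^2 + (-256)*t^6*d^6*qz^3*s*m + (256)*t^6*d^7*qz*m + (1024)*t^6*d^7*qz^2*s + (-1024)*t^6*d^8 + (40)*t^8*d^4*qz^3*m^3 + (-112)*t^8*d^5*qz^2*m^2 + (-512)*t^8*d^5*qz^3*s*m + (256)*t^8*d^6*qz*m + (1280)*t^8*d^6*qz^2*s + (-256)*t^8*d^7 + (73)*t^10*d^3*qz^3*m^3 + (-172)*t^10*d^4*qz^2*m^2 + (3040)*t^10*d^4*qz^3*s*m + (352)*t^10*d^5*qz*m + (-13696)*t^10*d^5*qz^2*s + (-640)*t^10*d^6 + (36)*t^12*d^2*qz^3*m^3 + (75)*t^12*d^3*qz^2*m^2 + (1280)*t^12*d^3*qz^3*s*m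 + (-816)*t^12*d^4*qz*m + (4000)*t^12*d^4*qz^2*s + (4320)*t^12*d^5 + (6)*t^14*d*qz^3*m^3 + (84)*t^14*d^2*qz^2*m^2 + (-1461)*t^14*d^2*qz^3*s*m + (-111)*t^14*d^3*qz*m + (9684)*t^14*d^3*qz^2*s + (-2004)*t^14*d^4 + (18)*t^16*d*qz^2*m^2 + (-660)*t^16*d*qz^3*s*m + (180)*t^16*d^2*qz*m + (-1743)*t^16*d^2*qz^2*s + (-1053)*t^16*d^3 + (-18)*t^18*qz^3*s*m + (54)*t^18*d*qz*m + (-1908)*t^18*d*qz^2*s + (324)*t^18*d^2 + (-54)*t^20*qz^2*s + (162)*t^20*d) * h2 + ((81)*c^10*a^10*qz^2*s + (67)*c^10*d*a^6*qz^2*s + (-13)*c^10*d^2*a^2*qz^2*s + (111)*c^11*a^7*qz^2*s + (81)*c^11*a^11 + (14)*c^11*d*a^3*qz^2*s + (67)*c^11*d*a^7 + (-13)*c^11*d^2*a^3 + (33)*c^12*a^4*qz^2*s + (111)*c^12*a^8 + (1)*c^12*d*qz^2*s + (14)*c^12*d*a^4 + (-1)*c^12*d^2 + (3)*c^13*a*qz^2*s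 + (33)*c^13*a^5 + (1)*c^13*d*a + (3)*c^14*a^2 + (-162)*t^2*c^9*a^9*qz^2*s + (-134)*t^2*c^9*d*a^5*qz^2*s + (26)*t^2*c^9*d^2*a*qz^2*s + (-222)*t^2*c^10*a^6*qz^2*s + (-81)*t^2*c^10*a^10 + (-28)*t^2*c^10*d*a^2*qz^2*s + (-67)*t^2*c^10*d*a^6 + (13)*t^2*c^10*d^2*a^2 + (-66)*t^2*c^11*a^3*qz^2*s + (-111)*t^2*c^11*a^7 + (-14)*t^2*c^11*d*a^3 + (-6)*t^2*c^12*qz^2*s + (-33)*t^2*c^12*a^4 + (-1)*t^2*c^12*d + (-3)*t^2*c^13*a + (243)*t^4*c^8*a^8*qz^2*s + (201)*t^4*c^8*d*a^4*qz^2*s + (-39)*t^4*c^8*d^2*qz^2*s + (333)*t^4*c^9*a^5*qz^2*s + (81)*t^4*c^9*a^9 + (42)*t^4*c^9*d*a*qz^2*s + (67)*t^4*c^9*d*a^5 + (-13)*t^4*c^9*d^2*a + (99)*t^4*c^10*a^2*qz^2*s + (111)*t^4*c^10*a^6 + (14)*t^4*c^10*d*a^2 + (33)*t^4*c^11*a^3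 + (3)*t^4*c^12 + (-324)*t^6*c^7*a^7*qz^2*s + (-268)*t^6*c^7*d*a^3*qz^2*s + (-444)*t^6*c^8*a^4*qz^2*s + (-81)*t^6*c^8*a^8 + (-56)*t^6*c^8*d*qz^2*s + (-67)*t^6*c^8*d*a^4 + (13)*t^6*c^8*d^2 + (-132)*t^6*c^9*a*qz^2*s + (-111)*t^6*c^9*a^5 + (-14)*t^6*c^9*d*a + (-33)*t^6*c^10*a^2 + (405)*t^8*c^6*a^6*qz^2*s + (335)*t^8*c^6*d*a^2*qz^2*s + (555)*t^8*c^7*a^3*qz^2*s + (81)*t^8*c^7*a^7 + (67)*t^8*c^7*d*a^3 + (165)*t^8*c^8*qz^2*s + (111)*t^8*c^8*a^4 + (14)*t^8*c^8*d + (33)*t^8*c^9*a + (-486)*t^10*c^5*a^5*qz^2*s + (-402)*t^10*c^5*d*a*qz^2*s + (-666)*t^10*c^6*a^2*qz^2*s + (-81)*t^10*c^6*a^6 + (-67)*t^10*c^6*d*a^2 + (-111)*t^10*c^7*a^3 + (-33)*t^10*c^8 + (567)*t^12*c^4*a^4*qz^2*s + (469)*t^12*c^4*d*qz^2*s + (777)*t^12*c^5*a*qz^2*s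 + (81)*t^12*c^5*a^5 + (67)*t^12*c^5*d*a + (111)*t^12*c^6*a^2 + (-648)*t^14*c^3*a^3*qz^2*s + (-888)*t^14*c^4*qz^2*s + (-81)*t^14*c^4*a^4 + (-67)*t^14*c^4*d + (-111)*t^14*c^5*a + (729)*t^16*c^2*a^2*qz^2*s + (81)*t^16*c^3*a^3 + (111)*t^16*c^4 + (-810)*t^18*c*a*qz^2*s + (-81)*t^18*c^2*a^2 + (891)*t^20*qz^2*s + (81)*t^20*c*a + (-81)*t^22) * h3⟩

lemma keyA {K : Type*} [CommRing K] (th aa cc dd : K)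
    (h : th^4 + cc*th + dd = 0) :
    (th^3 + aa*th^2 + aa^2*th - 3*aa^3)^4
      + (12*aa^3 + 3*cc) * (th^3 + aa*th^2 + aa^2*th - 3*aa^3)^3
      + (54*aa^6 + 6*dd*aa^2 + 30*cc*aa^3 + 3*cc^2) * (th^3 + aa*th^2 + aa^2*th - 3*aa^3)^2
      + (108*aa^9 + 40*dd*aa^5 - 4*dd^2*aa + 100*cc*aa^6 + 4*cc*dd*aa^2 + 20*cc^2*aa^3 + cc^3) * (th^3 + aa*th^2 + aa^2*th - 3*aa^3)
      + (81*aa^12 + 67*dd*aa^8 - 13*dd^2*aa^4 + dd^3 + 111*cc*aa^9 + 14*cc*dd*aa^5 - cc*dd^2*aa + 33*cc^2*aa^6 + cc^2*dd*aa^2 + 3*cc^3*aa^3) = 0 := by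
  linear_combination ((1)*dd^2 + (-1)*aa*cc*dd + (1)*aa^2*cc^2 + (-1)*aa^4*dd + (2)*aa^5*cc + (1)*aa^8 + (-1)*th*cc*dd + (1)*th*aa*cc^2 + (-4)*th*aa^3*dd + (5)*th*aa^4*cc + (4)*th*aa^7 + (1)*th^2*cc^2 + (-4)*th^2*aa^2*dd + (8)*th^2*aa^3*cc + (10)*th^2*aa^6 + (-4)*th^3*aa*dd + (8)*th^3*aa^2*cc + (16)*th^3*aa^5 + (-1)*th^4*dd + (5)*th^4*aa*cc + (19)*th^4*aa^4 + (2)*th^5*cc + (16)*th^5*aa^3 + (10)*th^6*aa^2 + (4)*th^7*aa + (1)*th^8) * h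


lemma no_denominator {K : Type} [Field K] [Algebra ℚ K] [FiniteDimensional ℚ K]
    (θ β : K) (q : ℕ) (hq5 : 5 ≤ q)
    (fz : ℤ[X]) (hfm : fz.Monic) (hfdeg : fz.degree = 4)
    (hfθ : Polynomial.aeval θ fz = 0)
    (hmin : (minpoly ℚ θ).degree = 4)
    (w : ℤ[X]) (hwdeg : w.degree < 4) (j : ℕ) (hwj : w.coeff j = 1)
    (hβ : (q : K) * β = Polynomial.aeval θ w)
    (hadj : Algebra.adjoin ℤ ({θ} : Set K) = integralClosure ℤ K)
    (hint : IsIntegral ℤ β) : False := by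
  have hmem : β ∈ Algebra.adjoin ℤ ({θ} : Set K) := by
    rw [hadj]; exact hint
  rw [Algebra.adjoin_singleton_eq_range_aeval] at hmem
  obtain ⟨g, hg⟩ := hmem
  have hsplit := Polynomial.modByMonic_add_div g fz
  have hrθ : Polynomial.aeval θ (g %ₘ fz) = β := by
    have := congrArg (Polynomial.aeval θ) hsplit
    simp only [map_add, map_mul, hfθ, zero_mul, add_zero] at this
    rw [this]; exact hg
  have hrdeg : (g %ₘ fz).degree < 4 := hfdeg ▸ Polynomial.degree_modByMonic_lt g hfm
  set r : ℤ[X] := g %ₘ fz with hrdef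
  set G : ℚ[X] := Polynomial.C (q : ℚ) * (r.map (algebraMap ℤ ℚ)) - w.map (algebraMap ℤ ℚ) with hGdef
  have hGθ : Polynomial.aeval θ G = 0 := by
    simp only [hGdef, map_sub, map_mul, Polynomial.aeval_C,
      Polynomial.aeval_map_algebraMap, hrθ]
    rw [show (algebraMap ℚ K) (q : ℚ) = (q : K) by push_cast; simp]
    rw [hβ]; ring
  have hG0 : G = 0 := by
    by_contra h0
    have h1 := minpoly.degree_le_of_ne_zero ℚ θ h0 hGθ
    have h2 : G.degree < 4 := by
      apply lt_of_le_of_lt (Polynomial.degree_sub_le _ _)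
      apply max_lt
      · apply lt_of_le_of_lt (Polynomial.degree_mul_le _ _)
        calc (Polynomial.C (q:ℚ)).degree + (r.map (algebraMap ℤ ℚ)).degree
            ≤ 0 + r.degree := add_le_add Polynomial.degree_C_le (Polynomial.degree_map_le)
          _ = r.degree := zero_add _
          _ < 4 := hrdeg
      · exact lt_of_le_of_lt Polynomial.degree_map_le hwdeg
    rw [hmin] at h1
    exact absurd (lt_of_le_of_lt h1 h2) (lt_irrefl _)
  have hco := congrArg (fun p : ℚ[X] => p.coeff j) hG0
  simp only [hGdef, Polynomial.coeff_sub, Polynomial.coeff_C_mul, Polynomial.coeff_map,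
    Polynomial.coeff_zero, algebraMap_int_eq, eq_intCast, hwj] at hco
  have hco' : (q : ℚ) * ((r.coeff j : ℤ) : ℚ) = ((1:ℤ) : ℚ) := by
    push_cast at hco ⊢; linarith
  have hz : (q : ℤ) * r.coeff j = 1 := by exact_mod_cast hco'
  have hle : (q : ℤ) ≤ 1 := Int.le_of_dvd one_pos ⟨r.coeff j, hz.symm⟩
  have : (5 : ℤ) ≤ (q : ℤ) := by exact_mod_cast hq5
  omega

theorem aux_main (c d t : ℤ) (hc : c ≠ 0) (hd : d ≠ 0)
    (hroot : t ^ 3 - 4 * d * t - c ^ 2 = 0)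
    (hmono : IsMonogenic (X ^ 4 + C c * X + C d)) :
    ∀ q : ℕ, q.Prime → 5 ≤ q → (q : ℤ) ∣ 3 * t ^ 2 - 4 * d →
      ¬ ((q : ℤ) ^ 2 ∣ 3 * t ^ 2 - 4 * d) ∧ (q : ℤ) ∣ 16 * d - 3 * t ^ 2 ∧
        ¬ ((q : ℤ) ^ 2 ∣ 16 * d - 3 * t ^ 2) := by
  intro q hqp hq5 hdvd
  -- basic number facts
  have hqpZ : Prime (q : ℤ) := Nat.prime_iff_prime_int.mp hqp
  have hq5' : (5 : ℤ) ≤ (q : ℤ) := by exact_mod_cast hq5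
  have hqne2 : ¬ ((q : ℤ) ∣ 2) := by
    intro h; have := Int.le_of_dvd (by norm_num) h; omega
  have hqne4 : ¬ ((q : ℤ) ∣ 4) := by
    intro h
    rcases hqpZ.dvd_mul.mp (show (q:ℤ) ∣ 2 * 2 by norm_num at h ⊢; exact h) with h'|h' <;>
      exact hqne2 h'
  -- setup of the splitting field and root
  set fz : ℤ[X] := X ^ 4 + C c * X + C d with hfzdef
  set F : ℚ[X] := X ^ 4 + C (c : ℚ) * X + C (d : ℚ) with hFdef
  have hmapF : fz.map (algebraMap ℤ ℚ) = F := by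
    simp [hfzdef, hFdef, Polynomial.map_add, Polynomial.map_mul, Polynomial.map_pow,
      Polynomial.map_X, Polynomial.map_C, algebraMap_int_eq, eq_intCast, map_intCast]
  have hFdeg : F.degree = 4 := by
    rw [hFdef]; compute_degree!
  have hfzmonic : fz.Monic := hmono.1
  have hfzdeg : fz.degree = 4 := by
    rw [hfzdef]; compute_degree!
  have hFmonic : F.Monic := by
    rw [← hmapF]; exact hfzmonic.map _
  have hFirr : Irreducible F := by rw [← hmapF]; exact hmono.2.1
  set K := F.SplittingField with hKdef
  haveI : CharZero K := charZero_of_injective_algebraMap (algebraMap ℚ K).injective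
  obtain ⟨θ, hθ⟩ := Polynomial.Splits.exists_eval_eq_zero
    (Polynomial.SplittingField.splits F) (by rw [Polynomial.degree_map, hFdeg]; exact (by norm_num))
  have hθF : Polynomial.aeval θ F = 0 := by rwa [Polynomial.aeval_def, ← Polynomial.eval_map]
  have hθZ : Polynomial.aeval θ fz = 0 := by
    rw [← Polynomial.aeval_map_algebraMap ℚ, hmapF]; exact hθF
  have hminθ : minpoly ℚ θ = F := (minpoly.eq_of_irreducible_of_monic hFirr hθF hFmonic).symm
  have hmindeg : (minpoly ℚ θ).degree = 4 := by rw [hminθ]; exact hFdeg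
  have hθK : θ ^ 4 + (c : K) * θ + (d : K) = 0 := by
    have := hθZ
    simp only [hfzdef, map_add, map_mul, map_pow, Polynomial.aeval_X, Polynomial.aeval_C,
      algebraMap_int_eq, eq_intCast, map_intCast] at this
    exact this
  have hadj : Algebra.adjoin ℤ ({θ} : Set K) = integralClosure ℤ K := hmono.2.2 K θ hθZ
  have hq0 : (q : K) ≠ 0 := Nat.cast_ne_zero.mpr (by omega)
  by_cases hqt : (q : ℤ) ∣ t
  · -- q ∣ t
    have hcop4 : IsCoprime ((q:ℤ)) 4 := hqpZ.coprime_iff_not_dvd.mpr hqne4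
    have h4d : (q : ℤ) ∣ 4 * d := by
      obtain ⟨t1, ht1⟩ := hqt
      obtain ⟨m0, hm0⟩ := hdvd
      exact ⟨3*q*t1^2 - m0, by linear_combination 3*(t + q*t1)*ht1 - hm0⟩
    have hqd : (q : ℤ) ∣ d := hcop4.dvd_of_dvd_mul_left h4d
    have hqt2 : (q : ℤ)^2 ∣ t^2 := pow_dvd_pow_of_dvd hqt 2
    by_cases hq2d : (q : ℤ) ^ 2 ∣ d
    · -- contradiction case B
      exfalso
      obtain ⟨d1, hd1⟩ := hq2d
      have h3c : (q:ℤ)^3 ∣ c^2 := by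
        obtain ⟨t1, ht1⟩ := hqt
        exact ⟨t1^3 - 4*d1*t1, by
          linear_combination -hroot + (t^2 + t*q*t1 + q^2*t1^2 - 4*d)*ht1 - 4*q*t1*hd1⟩
      have hqc2 : (q:ℤ) ∣ c^2 := dvd_trans (dvd_pow_self (q:ℤ) (by norm_num : (3:ℕ) ≠ 0)) h3c
      have hqc : (q:ℤ) ∣ c := hqpZ.dvd_of_dvd_pow hqc2
      obtain ⟨c1, hc1⟩ := hqc
      have hqc1 : (q:ℤ) ∣ c1 := by
        obtain ⟨k, hk⟩ := h3c
        have hq2ne : ((q:ℤ))^2 ≠ 0 := pow_ne_zero _ (by omega)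
        have hc1k : c1^2 = q * k := by
          apply mul_left_cancel₀ hq2ne
          linear_combination hk - (c + q*c1)*hc1
        exact hqpZ.dvd_of_dvd_pow (show (q:ℤ) ∣ c1^2 from ⟨k, hc1k⟩)
      obtain ⟨c2, hc2'⟩ := hqc1
      have hc2 : c = (q:ℤ)^2 * c2 := by rw [hc1, hc2']; ring
      -- casts
      have hcK : (c : K) = (q:K)^2 * (c2 : K) := by
        have := congrArg (Int.castRingHom K) hc2; simp only [map_add, map_sub, map_mul, map_pow, map_natCast, map_ofNat, eq_intCast] at this; exact this
      have hdK : (d : K) = (q:K)^2 * (d1 : K) := by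
        have := congrArg (Int.castRingHom K) hd1; simp only [map_add, map_sub, map_mul, map_pow, map_natCast, map_ofNat, eq_intCast] at this; exact this
      have hθK' : θ^4 + ((q:K)^2*(c2:K))*θ + ((q:K)^2*(d1:K)) = 0 := by
        rw [← hcK, ← hdK]; exact hθK
      set β : K := θ^2 / (q:K) with hβdef
      have hqβ : (q:K) * β = θ^2 := by rw [hβdef]; exact mul_div_cancel₀ _ hq0
      have hβeq : β^4 + 2*(d1:K)*β^2 - (q:K)*(c2:K)^2*β + (d1:K)^2 = 0 := by
        apply mul_left_cancel₀ (pow_ne_zero 4 hq0)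
        rw [mul_zero]
        linear_combination (θ^4 - (q:K)^2*(c2:K)*θ + (q:K)^2*(d1:K)) * hθK'
          + (((q:K)*β)^3 + ((q:K)*β)^2*θ^2 + (q:K)*β*θ^4 + θ^6
             + 2*(q:K)^2*(d1:K)*((q:K)*β + θ^2) - (q:K)^4*(c2:K)^2) * hqβ
      have hint : IsIntegral ℤ β := by
        refine ⟨X^4 + (C (2*d1) * X^2 + C (-((q:ℤ)*c2^2)) * X + C (d1^2)), ?_, ?_⟩
        · apply Polynomial.monic_X_pow_add
          exact lt_of_le_of_lt (by compute_degree!) (by norm_num : (3:WithBot ℕ) < 4)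
        · rw [← Polynomial.aeval_def]
          have : Polynomial.aeval β (X^4 + (C (2*d1) * X^2 + C (-((q:ℤ)*c2^2)) * X + C (d1^2)))
              = β^4 + 2*(d1:K)*β^2 - (q:K)*(c2:K)^2*β + (d1:K)^2 := by
            simp only [map_add, map_mul, map_pow, Polynomial.aeval_X, Polynomial.aeval_C,
              algebraMap_int_eq, eq_intCast, map_intCast]
            push_cast
            ring
          rw [this, hβeq]
      have hβw : (q : K) * β = Polynomial.aeval θ (X^2 : ℤ[X]) := by
        simp only [map_pow, Polynomial.aeval_X]
        rw [hβdef]; exact mul_div_cancel₀ _ hq0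
      exact no_denominator θ β q hq5 fz hfzmonic hfzdeg hθZ hmindeg
        (X^2 : ℤ[X]) (by rw [Polynomial.degree_X_pow]; norm_num) 2
        (by simp) hβw hadj hint
    · -- elementary conclusion
      have hcop4' : IsCoprime ((q:ℤ)^2) 4 := hcop4.pow_left
      refine ⟨?_, ?_, ?_⟩
      · intro h
        have h4 : (q:ℤ)^2 ∣ 4*d := by
          have := dvd_sub (hqt2.mul_left 3) h
          rwa [show 3*t^2 - (3*t^2 - 4*d) = 4*d by ring] at this
        exact hq2d (hcop4'.dvd_of_dvd_mul_left h4)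
      · have hqtt : (q:ℤ) ∣ t^2 := by
          have := hqt.mul_right t; rwa [← pow_two] at this
        have := dvd_sub (hqd.mul_left 16) (hqtt.mul_left 3)
        rwa [show 16*d - 3*t^2 = 16*d - 3*t^2 by ring] at this
      · intro h
        have h16 : (q:ℤ)^2 ∣ 4*(4*d) := by
          have := dvd_add h (hqt2.mul_left 3)
          rwa [show 16*d - 3*t^2 + 3*t^2 = 4*(4*d) by ring] at this
        exact hq2d (hcop4'.dvd_of_dvd_mul_left (hcop4'.dvd_of_dvd_mul_left h16))
  · -- case A: q does not divide t
    exfalso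
    have hqc : ¬ ((q:ℤ) ∣ c) := by
      intro h
      have h1 : (q:ℤ) ∣ c^2 := by have := h.mul_right c; rwa [← pow_two] at this
      have h2 : (q:ℤ) ∣ t^3 - 4*d*t := by
        rw [show t^3 - 4*d*t = c^2 by linarith]; exact h1
      have h3 : (q:ℤ) ∣ 2*t^3 := by
        have := dvd_sub (hdvd.mul_left t) h2
        rwa [show t*(3*t^2 - 4*d) - (t^3 - 4*d*t) = 2*t^3 by ring] at this
      have hcop2 : IsCoprime ((q:ℤ)) 2 := hqpZ.coprime_iff_not_dvd.mpr hqne2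
      exact hqt (hqpZ.dvd_of_dvd_pow (hcop2.dvd_of_dvd_mul_left h3))
    have hcopc : IsCoprime ((q:ℤ)) c := hqpZ.coprime_iff_not_dvd.mpr hqc
    obtain ⟨u, v, huv⟩ := (hcopc.pow_left (m := 2) : IsCoprime ((q:ℤ)^2) c)
    set a : ℤ := -t^2*v with hadef
    set s : ℤ := t^2*u with hsdef
    have ha : c*a = (q:ℤ)^2*s - t^2 := by
      rw [hadef, hsdef]; linear_combination (-t^2)*huv
    obtain ⟨m, hm⟩ := hdvd
    obtain ⟨b3, hb3⟩ : (q:ℤ) ∣ (12*a^3 + 3*c) :=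
      (hcopc.pow_right (n := 3)).dvd_of_dvd_mul_left (dvdA3 t c d a q s m hroot hm ha)
    obtain ⟨b2, hb2⟩ : (q:ℤ)^2 ∣ (54*a^6 + 6*d*a^2 + 30*c*a^3 + 3*c^2) :=
      (hcopc.pow (m := 2) (n := 6)).dvd_of_dvd_mul_left (dvdA2 t c d a q s m hroot hm ha)
    obtain ⟨b1, hb1⟩ : (q:ℤ)^3 ∣ (108*a^9 + 40*d*a^5 - 4*d^2*a + 100*c*a^6 + 4*c*d*a^2 + 20*c^2*a^3 + c^3) :=
      (hcopc.pow (m := 3) (n := 9)).dvd_of_dvd_mul_left (dvdA1 t c d a q s m hroot hm ha)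
    obtain ⟨b0, hb0⟩ : (q:ℤ)^4 ∣ (81*a^12 + 67*d*a^8 - 13*d^2*a^4 + d^3 + 111*c*a^9 + 14*c*d*a^5 - c*d^2*a + 33*c^2*a^6 + c^2*d*a^2 + 3*c^3*a^3) :=
      (hcopc.pow (m := 4) (n := 12)).dvd_of_dvd_mul_left (dvdA0 t c d a q s m hroot hm ha)
    -- casts of the divisibility equations
    have hKB3 : 12*(a:K)^3 + 3*(c:K) = (q:K)*(b3:K) := by
      have := congrArg (Int.castRingHom K) hb3; simp only [map_add, map_sub, map_mul, map_pow, map_natCast, map_ofNat, eq_intCast] at this; exact this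
    have hKB2 : 54*(a:K)^6 + 6*(d:K)*(a:K)^2 + 30*(c:K)*(a:K)^3 + 3*(c:K)^2
        = (q:K)^2*(b2:K) := by
      have := congrArg (Int.castRingHom K) hb2; simp only [map_add, map_sub, map_mul, map_pow, map_natCast, map_ofNat, eq_intCast] at this; exact this
    have hKB1 : 108*(a:K)^9 + 40*(d:K)*(a:K)^5 - 4*(d:K)^2*(a:K) + 100*(c:K)*(a:K)^6
        + 4*(c:K)*(d:K)*(a:K)^2 + 20*(c:K)^2*(a:K)^3 + (c:K)^3 = (q:K)^3*(b1:K) := by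
      have := congrArg (Int.castRingHom K) hb1; simp only [map_add, map_sub, map_mul, map_pow, map_natCast, map_ofNat, eq_intCast] at this; exact this
    have hKB0 : 81*(a:K)^12 + 67*(d:K)*(a:K)^8 - 13*(d:K)^2*(a:K)^4 + (d:K)^3
        + 111*(c:K)*(a:K)^9 + 14*(c:K)*(d:K)*(a:K)^5 - (c:K)*(d:K)^2*(a:K)
        + 33*(c:K)^2*(a:K)^6 + (c:K)^2*(d:K)*(a:K)^2 + 3*(c:K)^3*(a:K)^3
        = (q:K)^4*(b0:K) := by
      have := congrArg (Int.castRingHom K) hb0; simp only [map_add, map_sub, map_mul, map_pow, map_natCast, map_ofNat, eq_intCast] at this; exact this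
    have hmainq : (θ^3 + (a:K)*θ^2 + (a:K)^2*θ - 3*(a:K)^3)^4
        + ((q:K)*(b3:K))*(θ^3 + (a:K)*θ^2 + (a:K)^2*θ - 3*(a:K)^3)^3
        + ((q:K)^2*(b2:K))*(θ^3 + (a:K)*θ^2 + (a:K)^2*θ - 3*(a:K)^3)^2
        + ((q:K)^3*(b1:K))*(θ^3 + (a:K)*θ^2 + (a:K)^2*θ - 3*(a:K)^3)
        + (q:K)^4*(b0:K) = 0 := by
      linear_combination (keyA θ (a:K) (c:K) (d:K) hθK)
        - (θ^3 + (a:K)*θ^2 + (a:K)^2*θ - 3*(a:K)^3)^3 * hKB3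
        - (θ^3 + (a:K)*θ^2 + (a:K)^2*θ - 3*(a:K)^3)^2 * hKB2
        - (θ^3 + (a:K)*θ^2 + (a:K)^2*θ - 3*(a:K)^3) * hKB1
        - hKB0
    set β : K := (θ^3 + (a:K)*θ^2 + (a:K)^2*θ - 3*(a:K)^3) / (q:K) with hβdef
    have hqβ : (q:K) * β = θ^3 + (a:K)*θ^2 + (a:K)^2*θ - 3*(a:K)^3 := by
      rw [hβdef]; exact mul_div_cancel₀ _ hq0
    have hβeq : β^4 + (b3:K)*β^3 + (b2:K)*β^2 + (b1:K)*β + (b0:K) = 0 := by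
      apply mul_left_cancel₀ (pow_ne_zero 4 hq0)
      rw [mul_zero]
      linear_combination hmainq
        + (((q:K)*β)^3 + ((q:K)*β)^2*(θ^3 + (a:K)*θ^2 + (a:K)^2*θ - 3*(a:K)^3)
           + (q:K)*β*(θ^3 + (a:K)*θ^2 + (a:K)^2*θ - 3*(a:K)^3)^2
           + (θ^3 + (a:K)*θ^2 + (a:K)^2*θ - 3*(a:K)^3)^3
           + (q:K)*(b3:K)*(((q:K)*β)^2 + (q:K)*β*(θ^3 + (a:K)*θ^2 + (a:K)^2*θ - 3*(a:K)^3)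
               + (θ^3 + (a:K)*θ^2 + (a:K)^2*θ - 3*(a:K)^3)^2)
           + (q:K)^2*(b2:K)*((q:K)*β + (θ^3 + (a:K)*θ^2 + (a:K)^2*θ - 3*(a:K)^3))
           + (q:K)^3*(b1:K)) * hqβ
    have hint : IsIntegral ℤ β := by
      refine ⟨X^4 + (C b3 * X^3 + C b2 * X^2 + C b1 * X + C b0), ?_, ?_⟩
      · apply Polynomial.monic_X_pow_add
        exact lt_of_le_of_lt (by compute_degree!) (by norm_num : (3:WithBot ℕ) < 4)
      · rw [← Polynomial.aeval_def]
        have : Polynomial.aeval β (X^4 + (C b3 * X^3 + C b2 * X^2 + C b1 * X + C b0))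
            = β^4 + (b3:K)*β^3 + (b2:K)*β^2 + (b1:K)*β + (b0:K) := by
          simp only [map_add, map_mul, map_pow, Polynomial.aeval_X, Polynomial.aeval_C,
            algebraMap_int_eq, eq_intCast, map_intCast]
          ring
        rw [this, hβeq]
    set wP : ℤ[X] := X^3 + (C a * X^2 + C (a^2) * X + C (-(3*a^3))) with hwPdef
    have hβw : (q : K) * β = Polynomial.aeval θ wP := by
      have haev : Polynomial.aeval θ wP = θ^3 + (a:K)*θ^2 + (a:K)^2*θ - 3*(a:K)^3 := by
        rw [hwPdef]
        simp only [map_add, map_mul, map_pow, Polynomial.aeval_X, Polynomial.aeval_C,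
          algebraMap_int_eq, eq_intCast, map_intCast]
        push_cast
        ring
      rw [haev, hβdef]
      exact mul_div_cancel₀ _ hq0
    have hwdeg : wP.degree < 4 := by
      apply lt_of_le_of_lt (show wP.degree ≤ 3 by rw [hwPdef]; compute_degree)
      norm_num
    have hwj : wP.coeff 3 = 1 := by
      rw [hwPdef]
      simp only [Polynomial.coeff_add, Polynomial.coeff_C_mul, Polynomial.coeff_X_pow,
        Polynomial.coeff_X, Polynomial.coeff_C]
      norm_num
    exact no_denominator θ β q hq5 fz hfzmonic hfzdeg hθZ hmindeg
      wP hwdeg 3 hwj hβw hadj hint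


theorem prime_exactly_divides (c d t : ℤ) (hc : c ≠ 0) (hd : d ≠ 0)
    (hroot : t ^ 3 - 4 * d * t - c ^ 2 = 0)
    (hmono : IsMonogenic (X ^ 4 + C c * X + C d))
    (hcyc : IsCyclic (quarticGal c d)) (hcard : Nat.card (quarticGal c d) = 4) :
    ∀ q : ℕ, q.Prime → 5 ≤ q → (q : ℤ) ∣ 3 * t ^ 2 - 4 * d →
      ¬ ((q : ℤ) ^ 2 ∣ 3 * t ^ 2 - 4 * d) ∧ (q : ℤ) ∣ 16 * d - 3 * t ^ 2 ∧
        ¬ ((q : ℤ) ^ 2 ∣ 16 * d - 3 * t ^ 2) :=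
  aux_main c d t hc hd hroot hmono
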